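/- Let z ~ N(ν, Q) with Q symmetric positive semidefinite, let ε₂ ~ N(0, R) independent of z with R symmetric positive definite, let 0 ≤ γ < 1, and set K = (1−γ) Q H'((1−γ) H Q H' + R)⁻¹. Then x = z + K(y + ε₂/√(1−γ) − H z) has distribution N(μ, P) with μ = ν + K(y − Hν) and P = (I − K H) Q. -/

import Mathlib

open Matrix MeasureTheory ProbabilityTheory

section AuxGaussian

open Real Measure
open scoped NNReal ENNReal

private lemma my_pdf_mul (m₁ m₂ yy : ℝ) {v₁ v₂ : ℝ} (h₁ : 0 < v₁) (h₂ : 0 < v₂) (x : ℝ) :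
    (√(2 * π * v₁))⁻¹ * rexp (-(x - m₁)^2 / (2 * v₁)) *
      ((√(2 * π * v₂))⁻¹ * rexp (-(yy - (m₂ + x))^2 / (2 * v₂))) =
    (√(2 * π * (v₁ + v₂)))⁻¹ * rexp (-(yy - (m₁ + m₂))^2 / (2 * (v₁ + v₂))) *
      ((√(2 * π * (v₁ * v₂ / (v₁ + v₂))))⁻¹ *
        rexp (-(x - (m₁ * v₂ + (yy - m₂) * v₁) / (v₁ + v₂))^2 /
          (2 * (v₁ * v₂ / (v₁ + v₂))))) := by
  have h12 : 0 < v₁ + v₂ := by linarith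
  rw [mul_mul_mul_comm, ← Real.exp_add, mul_mul_mul_comm, ← Real.exp_add]
  congr 1
  · rw [← mul_inv, ← mul_inv, ← Real.sqrt_mul (by positivity), ← Real.sqrt_mul (by positivity)]
    congr 2
    field_simp
  · congr 1
    field_simp
    ring

private lemma my_gaussianPDFReal_mul (m₁ m₂ yy : ℝ) {v₁ v₂ : ℝ≥0} (h₁ : v₁ ≠ 0) (h₂ : v₂ ≠ 0)
    (x : ℝ) :
    gaussianPDFReal m₁ v₁ x * gaussianPDFReal (m₂ + x) v₂ yy =
      gaussianPDFReal (m₁ + m₂) (v₁ + v₂) yy *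
        gaussianPDFReal (((m₁ * v₂ + (yy - m₂) * v₁) / (v₁ + v₂) : ℝ))
          (v₁ * v₂ / (v₁ + v₂)) x := by
  have h₁' : 0 < (v₁ : ℝ) := NNReal.coe_pos.mpr h₁.bot_lt
  have h₂' : 0 < (v₂ : ℝ) := NNReal.coe_pos.mpr h₂.bot_lt
  simp only [gaussianPDFReal, NNReal.coe_add, NNReal.coe_mul, NNReal.coe_div]
  exact my_pdf_mul m₁ m₂ yy h₁' h₂' x

private lemma my_lintegral_gaussianPDF_mul (m₁ m₂ yy : ℝ) {v₁ v₂ : ℝ≥0} (h₁ : v₁ ≠ 0)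
    (h₂ : v₂ ≠ 0) :
    ∫⁻ x, gaussianPDF m₁ v₁ x * gaussianPDF (m₂ + x) v₂ yy =
      gaussianPDF (m₁ + m₂) (v₁ + v₂) yy := by
  have hw : v₁ * v₂ / (v₁ + v₂) ≠ 0 := by
    positivity
  calc ∫⁻ x, gaussianPDF m₁ v₁ x * gaussianPDF (m₂ + x) v₂ yy
      = ∫⁻ x, gaussianPDF (m₁ + m₂) (v₁ + v₂) yy *
          gaussianPDF (((m₁ * (v₂:ℝ) + (yy - m₂) * v₁) / ((v₁:ℝ) + v₂)))
            (v₁ * v₂ / (v₁ + v₂)) x := by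
        congr 1
        ext x
        rw [gaussianPDF, gaussianPDF, gaussianPDF, gaussianPDF,
          ← ENNReal.ofReal_mul (gaussianPDFReal_nonneg _ _ _),
          ← ENNReal.ofReal_mul (gaussianPDFReal_nonneg _ _ _),
          my_gaussianPDFReal_mul m₁ m₂ yy h₁ h₂ x]
    _ = gaussianPDF (m₁ + m₂) (v₁ + v₂) yy := by
        rw [lintegral_const_mul _ (measurable_gaussianPDF _ _),
          lintegral_gaussianPDF_eq_one _ hw, mul_one]

private lemma my_gaussianReal_conv (m₁ m₂ : ℝ) (v₁ v₂ : ℝ≥0) :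
    ((gaussianReal m₁ v₁).prod (gaussianReal m₂ v₂)).map (fun p : ℝ × ℝ => p.1 + p.2)
      = gaussianReal (m₁ + m₂) (v₁ + v₂) := by
  by_cases h₁ : v₁ = 0
  · subst h₁
    rw [gaussianReal_zero_var, dirac_prod, Measure.map_map (by fun_prop) (by fun_prop)]
    have : ((fun p : ℝ × ℝ => p.1 + p.2) ∘ Prod.mk m₁) = (m₁ + ·) := rfl
    rw [this, gaussianReal_map_const_add, add_comm m₂ m₁, zero_add]
  by_cases h₂ : v₂ = 0
  · subst h₂
    rw [gaussianReal_zero_var, prod_dirac, Measure.map_map (by fun_prop) (by fun_prop)]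
    have : ((fun p : ℝ × ℝ => p.1 + p.2) ∘ (fun x => (x, m₂))) = (· + m₂) := rfl
    rw [this, gaussianReal_map_add_const, add_zero]
  have hmeas : ∀ (m : ℝ) (v : ℝ≥0), Measurable fun p : ℝ × ℝ => gaussianPDF (m + p.1) v p.2 := by
    intro m v
    simp only [gaussianPDF, gaussianPDFReal]
    fun_prop
  ext s hs
  rw [Measure.map_apply (by fun_prop) hs, Measure.prod_apply (measurable_add hs)]
  have hslice : ∀ x : ℝ, (Prod.mk x ⁻¹' ((fun p : ℝ × ℝ => p.1 + p.2) ⁻¹' s))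
      = (x + ·) ⁻¹' s := fun x => rfl
  simp_rw [hslice]
  have hmap : ∀ x : ℝ, gaussianReal m₂ v₂ ((x + ·) ⁻¹' s)
      = ∫⁻ yy in s, gaussianPDF (m₂ + x) v₂ yy := by
    intro x
    rw [← Measure.map_apply (measurable_const_add x) hs, gaussianReal_map_const_add,
      gaussianReal_apply _ (by simpa using h₂)]
  simp_rw [hmap]
  rw [gaussianReal_of_var_ne_zero m₁ h₁,
    lintegral_withDensity_eq_lintegral_mul _ (measurable_gaussianPDF _ _)
      (Measurable.lintegral_prod_right (f := fun x yy => gaussianPDF (m₂ + x) v₂ yy)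
        (hmeas m₂ v₂))]
  have : ∀ x : ℝ, gaussianPDF m₁ v₁ x * ∫⁻ yy in s, gaussianPDF (m₂ + x) v₂ yy
      = ∫⁻ yy in s, gaussianPDF m₁ v₁ x * gaussianPDF (m₂ + x) v₂ yy := fun x =>
    (lintegral_const_mul _ (measurable_gaussianPDF _ _)).symm
  simp only [Pi.mul_apply]
  simp_rw [this]
  rw [lintegral_lintegral_swap]
  · simp_rw [fun yy => my_lintegral_gaussianPDF_mul m₁ m₂ yy h₁ h₂]
    exact (gaussianReal_apply _ (by simp [h₁]) s).symm
  · apply Measurable.aemeasurable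
    exact (measurable_gaussianPDF m₁ v₁).comp measurable_fst |>.mul (hmeas m₂ v₂)

private lemma my_measurable_dot {n : ℕ} (u : Fin n → ℝ) :
    Measurable fun x : Fin n → ℝ => u ⬝ᵥ x := by
  unfold dotProduct
  exact Finset.measurable_sum _ fun i _ => ((measurable_pi_apply i).const_mul _)

private lemma my_measurable_mulVec {m n : ℕ} (M : Matrix (Fin m) (Fin n) ℝ) :
    Measurable fun v : Fin n → ℝ => M *ᵥ v :=
  measurable_pi_lambda _ fun i => my_measurable_dot (M i)

private lemma my_smul_posSemidef {n : ℕ} {c : ℝ} (hc : 0 ≤ c) {A : Matrix (Fin n) (Fin n) ℝ}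
    (hA : A.PosSemidef) : (c • A).PosSemidef := by
  have ht : Aᵀ = A := by
    have := hA.1.eq
    rwa [conjTranspose_eq_transpose_of_trivial] at this
  refine ⟨?_, fun x => ?_⟩
  · simp [Matrix.IsHermitian, conjTranspose_smul, conjTranspose_eq_transpose_of_trivial, ht]
  · convert smul_nonneg hc (hA.2 x) using 1
    simp only [Finsupp.sum, Finset.mul_sum, Matrix.smul_apply, smul_eq_mul]
    refine Finset.sum_congr rfl fun i _ => Finset.sum_congr rfl fun j _ => ?_
    ring

private lemma my_matrix_key {q r : ℕ} (Q : Matrix (Fin q) (Fin q) ℝ)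
    (H : Matrix (Fin r) (Fin q) ℝ)
    (R : Matrix (Fin r) (Fin r) ℝ) (hQ : Q.PosSemidef) (hR : R.PosDef)
    (γ : ℝ) (hγ1 : γ < 1) (K : Matrix (Fin q) (Fin r) ℝ)
    (hK : K = (1 - γ) • (Q * Hᵀ * ((1 - γ) • (H * Q * Hᵀ) + R)⁻¹)) :
    (1 - K * H) * Q * (1 - K * H)ᵀ + (1 - γ)⁻¹ • (K * R * Kᵀ) = (1 - K * H) * Q := by
  have hγ : (0:ℝ) < 1 - γ := by linarith
  have h0 : (H * Q * Hᵀ).PosSemidef := by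
    simpa [Matrix.conjTranspose_eq_transpose_of_trivial] using hQ.mul_mul_conjTranspose_same H
  have hSpd : ((1 - γ) • (H * Q * Hᵀ) + R).PosDef :=
    Matrix.PosDef.posSemidef_add (my_smul_posSemidef hγ.le h0) hR
  have hdet : IsUnit ((1 - γ) • (H * Q * Hᵀ) + R).det := hSpd.det_pos.ne'.isUnit
  have hKS : K * ((1 - γ) • (H * Q * Hᵀ) + R) = (1 - γ) • (Q * Hᵀ) := by
    rw [hK, Matrix.smul_mul, Matrix.mul_assoc, Matrix.nonsing_inv_mul _ hdet, Matrix.mul_one]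
  have hKR : K * R = (1 - γ) • (Q * Hᵀ - K * (H * Q * Hᵀ)) := by
    rw [smul_sub, ← hKS, Matrix.mul_add, Matrix.mul_smul]
    abel
  have hexp : (1 - γ)⁻¹ • (K * R * Kᵀ) = (Q * Hᵀ - K * (H * Q * Hᵀ)) * Kᵀ := by
    rw [hKR, Matrix.smul_mul, smul_smul, inv_mul_cancel₀ hγ.ne', one_smul]
  rw [hexp, transpose_sub, transpose_one, transpose_mul]
  simp only [Matrix.sub_mul, Matrix.mul_sub, Matrix.one_mul, Matrix.mul_one, Matrix.mul_assoc]
  abel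

end AuxGaussian

/-- A measure on `ℝ^n` is Gaussian with mean `m` and covariance `S` if every linear
functional pushes it to the corresponding one-dimensional Gaussian (Cramér–Wold). -/
def IsGaussianVec {n : ℕ} (π : Measure (Fin n → ℝ)) (m : Fin n → ℝ)
    (S : Matrix (Fin n) (Fin n) ℝ) : Prop :=
  ∀ a : Fin n → ℝ,
    π.map (fun x => a ⬝ᵥ x) = gaussianReal (a ⬝ᵥ m) (Real.toNNReal (a ⬝ᵥ (S *ᵥ a)))

/-- If `z ~ N(ν,Q)`, `ε₂ ~ N(0,R)` independent of `z`, and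
`K = (1−γ) Q H'((1−γ) H Q H' + R)⁻¹`, then `x = z + K(y + ε₂/√(1−γ) − H z)`
has distribution `N(μ, P)` with `μ = ν + K(y − Hν)` and `P = (I − K H) Q`. -/
theorem second_stage_update_distribution {q r : ℕ}
    (Q : Matrix (Fin q) (Fin q) ℝ) (H : Matrix (Fin r) (Fin q) ℝ)
    (R : Matrix (Fin r) (Fin r) ℝ)
    (hQ : Q.PosSemidef) (hR : R.PosDef)
    (γ : ℝ) (hγ0 : 0 ≤ γ) (hγ1 : γ < 1)
    (ν : Fin q → ℝ) (y : Fin r → ℝ)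
    (K : Matrix (Fin q) (Fin r) ℝ)
    (hK : K = (1 - γ) • (Q * Hᵀ * ((1 - γ) • (H * Q * Hᵀ) + R)⁻¹))
    (μz : Measure (Fin q → ℝ)) [IsProbabilityMeasure μz]
    (με : Measure (Fin r → ℝ)) [IsProbabilityMeasure με]
    (hz : IsGaussianVec μz ν Q) (hε : IsGaussianVec με 0 R) :
    IsGaussianVec
      ((μz.prod με).map
        (fun p => p.1 + K *ᵥ (y + (Real.sqrt (1 - γ))⁻¹ • p.2 - H *ᵥ p.1)))
      (ν + K *ᵥ (y - H *ᵥ ν)) ((1 - K * H) * Q) := by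
  intro a
  have hγ : (0:ℝ) < 1 - γ := by linarith
  set c : ℝ := (Real.sqrt (1 - γ))⁻¹ with hc
  set b : Fin q → ℝ := a ᵥ* (1 - K * H) with hb
  set d : Fin r → ℝ := c • (a ᵥ* K) with hd
  set k : ℝ := a ⬝ᵥ (K *ᵥ y) with hk
  have hF : Measurable (fun p : (Fin q → ℝ) × (Fin r → ℝ) =>
      p.1 + K *ᵥ (y + c • p.2 - H *ᵥ p.1)) := by
    apply measurable_fst.add
    exact (my_measurable_mulVec K).comp
      ((measurable_const.add (measurable_snd.const_smul c)).sub
        ((my_measurable_mulVec H).comp measurable_fst))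
  have hfun : ((fun x => a ⬝ᵥ x) ∘ fun p : (Fin q → ℝ) × (Fin r → ℝ) =>
      p.1 + K *ᵥ (y + c • p.2 - H *ᵥ p.1))
      = fun p => b ⬝ᵥ p.1 + d ⬝ᵥ p.2 + k := by
    funext p
    simp only [Function.comp_apply, hb, hd, hk, mulVec_add, mulVec_sub, mulVec_smul,
      dotProduct_add, dotProduct_sub, dotProduct_smul, smul_dotProduct,
      ← dotProduct_mulVec, sub_mulVec, one_mulVec, ← mulVec_mulVec, smul_eq_mul]
    ring
  have hcc : c * c = (1 - γ)⁻¹ := by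
    rw [hc, ← mul_inv, Real.mul_self_sqrt hγ.le]
  have hvar : b ⬝ᵥ (Q *ᵥ b) + d ⬝ᵥ (R *ᵥ d)
      = a ⬝ᵥ ((((1 - K * H) * Q * (1 - K * H)ᵀ) + (1 - γ)⁻¹ • (K * R * Kᵀ)) *ᵥ a) := by
    simp only [hd, hb, add_mulVec, dotProduct_add, ← mulVec_mulVec, mulVec_transpose,
      smul_mulVec, mulVec_smul, smul_dotProduct, dotProduct_smul, dotProduct_mulVec,
      vecMul_vecMul, Matrix.smul_vecMul, smul_eq_mul, ← hcc]
    ring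
  rw [Measure.map_map (my_measurable_dot a) hF, hfun]
  have hsplit : (fun p : (Fin q → ℝ) × (Fin r → ℝ) => b ⬝ᵥ p.1 + d ⬝ᵥ p.2 + k)
      = (· + k) ∘ ((fun s : ℝ × ℝ => s.1 + s.2) ∘
          Prod.map (fun x => b ⬝ᵥ x) (fun x => d ⬝ᵥ x)) := rfl
  rw [hsplit,
    ← Measure.map_map (measurable_add_const k)
      ((measurable_add).comp
        ((my_measurable_dot b).prodMap (my_measurable_dot d))),
    ← Measure.map_map (measurable_add)
      ((my_measurable_dot b).prodMap (my_measurable_dot d)),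
    ← Measure.map_prod_map _ _ (my_measurable_dot b) (my_measurable_dot d),
    hz b, hε d, my_gaussianReal_conv, gaussianReal_map_add_const]
  have hbQ : 0 ≤ b ⬝ᵥ (Q *ᵥ b) := by simpa using hQ.dotProduct_mulVec_nonneg b
  have hdR : 0 ≤ d ⬝ᵥ (R *ᵥ d) := by simpa using hR.posSemidef.dotProduct_mulVec_nonneg d
  congr 1
  · simp only [dotProduct_zero, add_zero, hb, hk, mulVec_add, mulVec_sub, dotProduct_add,
      dotProduct_sub, ← dotProduct_mulVec, sub_mulVec, one_mulVec, ← mulVec_mulVec]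
    ring
  · rw [← Real.toNNReal_add hbQ hdR, hvar, my_matrix_key Q H R hQ hR γ hγ1 K hK]
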